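/- Let G = (V, E) be a finite undirected graph and let G′ be obtained from G by adding, for each vertex v ∈ V, three new vertices a_v, b_v, c_v and the five edges a_v b_v, b_v c_v, c_v a_v, c_v v, and v a_v. Then for every ℓ ≥ 0: G contains ℓ pairwise vertex-disjoint cycles if and only if G′ admits a partition of its vertex set into at least ℓ + |V| vertex-disjoint cycles (a cycle cover with at least ℓ + |V| cycles). -/

import Mathlib

/-- The graph `G'` obtained from `G` by attaching, for each vertex `v`, a triangle
`a_v b_v c_v` (the three vertices `(v, 0), (v, 1), (v, 2)`) together with the edges
`c_v v` and `v a_v`. -/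
def cycleGadget {V : Type*} (G : SimpleGraph V) : SimpleGraph (V ⊕ V × Fin 3) :=
  SimpleGraph.fromRel (fun x y =>
    match x, y with
    | Sum.inl u, Sum.inl v => G.Adj u v
    | Sum.inl v, Sum.inr (w, i) => v = w ∧ (i = 0 ∨ i = 2)
    | Sum.inr (w, i), Sum.inr (w', j) => w = w' ∧ i ≠ j
    | _, _ => False)

namespace CycleGadgetAux

open Sum SimpleGraph Walk

variable {V : Type*} {G : SimpleGraph V}

/-! ### Adjacency characterizations -/

lemma cg_adj_inl_inl {u v : V} : (cycleGadget G).Adj (inl u) (inl v) ↔ G.Adj u v := by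
  constructor
  · rintro ⟨hne, h | h⟩; exacts [h, h.symm]
  · intro h; exact ⟨by simp [h.ne], Or.inl h⟩

lemma cg_adj_inl_inr {v w : V} {i : Fin 3} :
    (cycleGadget G).Adj (inl v) (inr (w, i)) ↔ v = w ∧ (i = 0 ∨ i = 2) := by
  constructor
  · rintro ⟨hne, h | h⟩; exacts [h, h.elim]
  · intro h; exact ⟨by simp, Or.inl h⟩

lemma cg_adj_inr_inr {w w' : V} {i j : Fin 3} :
    (cycleGadget G).Adj (inr (w, i)) (inr (w', j)) ↔ w = w' ∧ i ≠ j := by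
  constructor
  · rintro ⟨hne, h | h⟩; exacts [h, ⟨h.1.symm, h.2.symm⟩]
  · rintro ⟨rfl, h⟩; exact ⟨by simp [h], Or.inl ⟨rfl, h⟩⟩

lemma cg_adj_inr_inl {v w : V} {i : Fin 3} :
    (cycleGadget G).Adj (inr (w, i)) (inl v) ↔ v = w ∧ (i = 0 ∨ i = 2) :=
  ((cycleGadget G).adj_comm _ _).trans cg_adj_inl_inr

/-- Neighbors of `b_x`. -/
lemma cg_nb_b {x : V} {z : V ⊕ V × Fin 3} (h : (cycleGadget G).Adj (inr (x, 1)) z) :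
    z = inr (x, 0) ∨ z = inr (x, 2) := by
  rcases z with u | ⟨y, k⟩
  · rw [cg_adj_inr_inl] at h; rcases h.2 with h2 | h2 <;> simp at h2
  · rw [cg_adj_inr_inr] at h
    obtain ⟨rfl, hk⟩ := h
    fin_cases k <;> simp_all

/-- Neighbors of `a_x`. -/
lemma cg_nb_a {x : V} {z : V ⊕ V × Fin 3} (h : (cycleGadget G).Adj (inr (x, 0)) z) :
    z = inr (x, 1) ∨ z = inr (x, 2) ∨ z = inl x := by
  rcases z with u | ⟨y, k⟩
  · rw [cg_adj_inr_inl] at h; exact Or.inr (Or.inr (by rw [h.1]))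
  · rw [cg_adj_inr_inr] at h
    obtain ⟨rfl, hk⟩ := h
    fin_cases k <;> simp_all

/-- Neighbors of `c_x`. -/
lemma cg_nb_c {x : V} {z : V ⊕ V × Fin 3} (h : (cycleGadget G).Adj (inr (x, 2)) z) :
    z = inr (x, 0) ∨ z = inr (x, 1) ∨ z = inl x := by
  rcases z with u | ⟨y, k⟩
  · rw [cg_adj_inr_inl] at h; exact Or.inr (Or.inr (by rw [h.1]))
  · rw [cg_adj_inr_inr] at h
    obtain ⟨rfl, hk⟩ := h
    fin_cases k <;> simp_all

/-- Neighbors of `inl x`. -/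
lemma cg_nb_v {x : V} {z : V ⊕ V × Fin 3} (h : (cycleGadget G).Adj (inl x) z) :
    z = inr (x, 0) ∨ z = inr (x, 2) ∨ ∃ u, z = inl u ∧ G.Adj x u := by
  rcases z with u | ⟨y, k⟩
  · rw [cg_adj_inl_inl] at h; exact Or.inr (Or.inr ⟨u, rfl, h⟩)
  · rw [cg_adj_inl_inr] at h
    obtain ⟨rfl, hk⟩ := h
    rcases hk with rfl | rfl
    · exact Or.inl rfl
    · exact Or.inr (Or.inl rfl)

/-! ### Generic walk lemmas -/

lemma end_mem_support_tail {W : Type*} {H : SimpleGraph W} {a b : W} (p : H.Walk a b)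
    (hp : ¬ p.Nil) : b ∈ p.support.tail := by
  have hlen : p.support.tail ≠ [] := by
    have := p.length_support
    rw [Walk.not_nil_iff_lt_length] at hp
    intro h
    have : p.support.length ≤ 1 := by
      rw [p.support_eq_cons, h]; simp
    omega
  have hm := List.getLast_mem hlen
  have hgl : p.support.tail.getLast hlen = b := by
    rw [List.getLast_tail, p.getLast_support]
  rwa [hgl] at hm

lemma mem_support_rotate_iff {W : Type*} {H : SimpleGraph W} [DecidableEq W] {u v x : W}
    (c : H.Walk v v) (hc : ¬ c.Nil) (h : u ∈ c.support) :
    x ∈ (c.rotate u h).support ↔ x ∈ c.support := by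
  have hrot := (Walk.support_rotate c u h).perm
  have hc' : ¬ (c.rotate u h).Nil := by
    rw [Walk.not_nil_iff_lt_length] at hc ⊢
    have e1 : (c.rotate u h).support.length = (c.rotate u h).support.tail.length + 1 := by
      rw [(c.rotate u h).support_eq_cons]; simp
    have e2 : c.support.length = c.support.tail.length + 1 := by
      rw [c.support_eq_cons]; simp
    have h1 := (c.rotate u h).length_support
    have h2 := c.length_support
    have := hrot.length_eq
    omega
  have key : ∀ {a : W} (p : H.Walk a a) (hp : ¬ p.Nil) (y : W),
      y ∈ p.support ↔ y ∈ p.support.tail := by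
    intro a p hp y
    rw [p.mem_support_iff]
    exact ⟨fun hy => hy.elim (fun hh => hh ▸ end_mem_support_tail p hp) id, Or.inr⟩
  rw [key _ hc', key _ hc]
  exact hrot.mem_iff

/-- In a cycle based at `b`, there are two distinct neighbors of `b` on the cycle. -/
lemma cycle_two_nbrs {W : Type*} {H : SimpleGraph W} {b : W} {c : H.Walk b b}
    (hc : c.IsCycle) :
    ∃ x y, x ≠ y ∧ H.Adj b x ∧ H.Adj b y ∧ x ∈ c.support ∧ y ∈ c.support := by
  cases c with
  | nil => exact absurd hc (Walk.IsCycle.not_of_nil)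
  | cons h q =>
    rename_i s
    rw [Walk.cons_isCycle_iff] at hc
    obtain ⟨hq, he⟩ := hc
    cases hrev : q.reverse with
    | nil => exact absurd h (H.irrefl)
    | cons h2 r =>
      rename_i t
      have hy_edge : s(b, t) ∈ q.edges := by
        have : s(b, t) ∈ q.reverse.edges := by rw [hrev]; simp
        rwa [Walk.edges_reverse, List.mem_reverse] at this
      refine ⟨s, t, ?_, h, h2, ?_, ?_⟩
      · rintro rfl; exact he hy_edge
      · simp
      · have : t ∈ q.reverse.support := by rw [hrev]; simp
        rw [Walk.support_reverse, List.mem_reverse] at this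
        simp [this]

/-! ### Trap lemmas -/

/-- Membership in the gadget trap set of `x`. -/
def inT (x : V) (z : V ⊕ V × Fin 3) : Prop :=
  z = inr (x, 0) ∨ z = inr (x, 1) ∨ z = inr (x, 2) ∨ z = inl x

lemma trap_E {x : V} {z z' : V ⊕ V × Fin 3} (q : (cycleGadget G).Walk z z')
    (hz' : z' = inr (x, 1)) (hz : ¬ inT x z) : inl x ∈ q.support := by
  induction q with
  | nil => exact absurd (hz' ▸ (Or.inr (Or.inl rfl))) hz
  | @cons za zb zc hadj q ih =>
    by_cases h2 : inT x zb
    · rcases h2 with rfl | rfl | rfl | rfl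
      · rcases cg_nb_a hadj.symm with rfl | rfl | rfl <;>
          exact absurd (by simp [inT]) hz
      · rcases cg_nb_b hadj.symm with rfl | rfl <;>
          exact absurd (by simp [inT]) hz
      · rcases cg_nb_c hadj.symm with rfl | rfl | rfl <;>
          exact absurd (by simp [inT]) hz
      · simp
    · simp [ih hz' h2]

lemma trap_B {x : V} {z z' : V ⊕ V × Fin 3} (q : (cycleGadget G).Walk z z')
    (hz' : z' = inr (x, 1)) (hp : q.IsPath) (hz : inT x z) :
    ∀ y ∈ q.support, inT x y := by
  induction q with
  | nil =>
    intro y hy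
    simp at hy
    exact hy ▸ hz
  | @cons za zb zc hadj q ih =>
    intro y hy
    rw [Walk.support_cons, List.mem_cons] at hy
    rcases hy with rfl | hy
    · exact hz
    · have hzb : inT x zb := by
        rcases hz with rfl | rfl | rfl | rfl
        · rcases cg_nb_a hadj with rfl | rfl | rfl <;> simp [inT]
        · rcases cg_nb_b hadj with rfl | rfl <;> simp [inT]
        · rcases cg_nb_c hadj with rfl | rfl | rfl <;> simp [inT]
        · rcases cg_nb_v hadj with rfl | rfl | ⟨u, rfl, hu⟩
          · simp [inT]
          · simp [inT]
          · exfalso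
            have hni : ¬ inT x (inl u) := by
              simp only [inT]
              push_neg
              refine ⟨by simp, by simp, by simp, ?_⟩
              intro hux
              rw [inl.injEq] at hux
              subst hux
              exact G.irrefl hu
            have hmem := trap_E q hz' hni
            rw [Walk.cons_isPath_iff] at hp
            exact hp.2 hmem
      exact ih hz' hp.of_cons hzb y hy

/-- The structure of a cycle through `b_x`: it stays inside the gadget of `x` and
visits `a_x` and `c_x`. -/
lemma gadget_cycle_struct {x : V} {s : V ⊕ V × Fin 3} {c : (cycleGadget G).Walk s s}
    (hc : c.IsCycle) (hb : inr (x, 1) ∈ c.support) :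
    (∀ y ∈ c.support, inT x y) ∧ inr (x, 0) ∈ c.support ∧ inr (x, 2) ∈ c.support := by
  classical
  have hnil : ¬ c.Nil := hc.not_nil
  set c' := c.rotate _ hb with hc'def
  have hc' : c'.IsCycle := hc.rotate hb
  have hmem : ∀ y, y ∈ c'.support ↔ y ∈ c.support :=
    fun y => mem_support_rotate_iff c hnil hb
  constructor
  · intro y hy
    rw [← hmem] at hy
    revert hy
    cases hcc : c' with
    | nil => exact absurd (hcc ▸ hc') Walk.IsCycle.not_of_nil
    | cons h q =>
      rw [hcc, Walk.cons_isCycle_iff] at hc'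
      intro hy
      rw [Walk.support_cons, List.mem_cons] at hy
      rcases hy with rfl | hy
      · exact Or.inr (Or.inl rfl)
      · refine trap_B q rfl hc'.1 ?_ y hy
        rcases cg_nb_b h with rfl | rfl
        · exact Or.inl rfl
        · exact Or.inr (Or.inr (Or.inl rfl))
  · obtain ⟨p1, p2, hne, ha1, ha2, hm1, hm2⟩ := cycle_two_nbrs hc'
    rw [hmem] at hm1 hm2
    rcases cg_nb_b ha1 with rfl | rfl <;> rcases cg_nb_b ha2 with rfl | rfl
    · exact absurd rfl hne
    · exact ⟨hm1, hm2⟩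
    · exact ⟨hm2, hm1⟩
    · exact absurd rfl hne

/-! ### Pulling walks back to `G` -/

lemma pull_walk {s t : V ⊕ V × Fin 3} (p : (cycleGadget G).Walk s t)
    (hall : ∀ y ∈ p.support, ∃ a : V, y = inl a) :
    ∃ (a b : V) (q : G.Walk a b), s = inl a ∧ t = inl b ∧
      p.support = q.support.map inl ∧ p.edges = q.edges.map (Sym2.map inl) := by
  induction p with
  | nil =>
    rename_i z
    obtain ⟨a, rfl⟩ := hall z (by simp)
    exact ⟨a, a, Walk.nil, rfl, rfl, by simp, by simp⟩
  | @cons za zb zc hadj p ih =>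
    obtain ⟨a, rfl⟩ := hall za (by simp)
    obtain ⟨a2, b, q, hzb, rfl, hsup, hedg⟩ := ih (fun y hy => hall y (by simp [hy]))
    subst hzb
    have hadj' : G.Adj a a2 := cg_adj_inl_inl.mp hadj
    exact ⟨a, b, Walk.cons hadj' q, rfl, rfl, by simp [hsup], by simp [hedg]⟩

lemma pull_cycle {s : V ⊕ V × Fin 3} (p : (cycleGadget G).Walk s s) (hp : p.IsCycle)
    (hall : ∀ y ∈ p.support, ∃ a : V, y = inl a) :
    ∃ (a : V) (q : G.Walk a a), q.IsCycle ∧ p.support = q.support.map inl := by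
  obtain ⟨a, b, q, rfl, hab, hsup, hedg⟩ := pull_walk p hall
  rw [inl.injEq] at hab
  subst hab
  refine ⟨a, q, ?_, hsup⟩
  rw [Walk.isCycle_def]
  refine ⟨?_, ?_, ?_⟩
  · rw [Walk.isTrail_def]
    have := hp.isTrail.edges_nodup
    rw [hedg] at this
    exact this.of_map _
  · rintro rfl
    have h3 := hp.three_le_length
    have hlen : p.support.length = p.length + 1 := p.length_support
    rw [hsup] at hlen
    simp only [Walk.support_nil, List.map_cons, List.map_nil, List.length_cons,
      List.length_nil] at hlen
    omega
  · have hnd := hp.support_nodup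
    rw [hsup, ← List.map_tail] at hnd
    exact hnd.of_map _

/-! ### The gadget cycles used in the forward direction -/

/-- The triangle `b_x a_x c_x b_x`. -/
def triWalk (G : SimpleGraph V) (x : V) :
    (cycleGadget G).Walk (inr (x, 1)) (inr (x, 1)) :=
  Walk.cons (cg_adj_inr_inr.mpr ⟨rfl, by decide⟩ :
      (cycleGadget G).Adj (inr (x, 1)) (inr (x, 0)))
    (Walk.cons (cg_adj_inr_inr.mpr ⟨rfl, by decide⟩ :
        (cycleGadget G).Adj (inr (x, 0)) (inr (x, 2)))
      (Walk.cons (cg_adj_inr_inr.mpr ⟨rfl, by decide⟩ :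
          (cycleGadget G).Adj (inr (x, 2)) (inr (x, 1)))
        Walk.nil))

/-- The square `b_x a_x x c_x b_x`. -/
def sqWalk (G : SimpleGraph V) (x : V) :
    (cycleGadget G).Walk (inr (x, 1)) (inr (x, 1)) :=
  Walk.cons (cg_adj_inr_inr.mpr ⟨rfl, by decide⟩ :
      (cycleGadget G).Adj (inr (x, 1)) (inr (x, 0)))
    (Walk.cons (cg_adj_inr_inl.mpr ⟨rfl, Or.inl rfl⟩ :
        (cycleGadget G).Adj (inr (x, 0)) (inl x))
      (Walk.cons (cg_adj_inl_inr.mpr ⟨rfl, Or.inr rfl⟩ :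
          (cycleGadget G).Adj (inl x) (inr (x, 2)))
        (Walk.cons (cg_adj_inr_inr.mpr ⟨rfl, by decide⟩ :
            (cycleGadget G).Adj (inr (x, 2)) (inr (x, 1)))
          Walk.nil)))

lemma triWalk_support (x : V) :
    (triWalk G x).support = [inr (x, 1), inr (x, 0), inr (x, 2), inr (x, 1)] := rfl

lemma sqWalk_support (x : V) :
    (sqWalk G x).support = [inr (x, 1), inr (x, 0), inl x, inr (x, 2), inr (x, 1)] := rfl

lemma triWalk_isCycle (x : V) : (triWalk G x).IsCycle := by
  rw [Walk.isCycle_def]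
  refine ⟨?_, by simp [triWalk], ?_⟩
  · rw [Walk.isTrail_def]
    show ([s(inr (x,1), inr (x,0)), s(inr (x,0), inr (x,2)), s(inr (x,2), inr (x,1))] :
      List (Sym2 (V ⊕ V × Fin 3))).Nodup
    simp
  · show ([inr (x, 0), inr (x, 2), inr (x, 1)] : List (V ⊕ V × Fin 3)).Nodup
    simp

lemma sqWalk_isCycle (x : V) : (sqWalk G x).IsCycle := by
  rw [Walk.isCycle_def]
  refine ⟨?_, by simp [sqWalk], ?_⟩
  · rw [Walk.isTrail_def]
    show ([s(inr (x,1), inr (x,0)), s(inr (x,0), inl x), s(inl x, inr (x,2)),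
      s(inr (x,2), inr (x,1))] : List (Sym2 (V ⊕ V × Fin 3))).Nodup
    simp
  · show ([inr (x, 0), inl x, inr (x, 2), inr (x, 1)] : List (V ⊕ V × Fin 3)).Nodup
    simp

end CycleGadgetAux

open Sum SimpleGraph Walk CycleGadgetAux in
/-- `G` contains `ℓ` vertex-disjoint cycles iff `G'` admits a cycle cover with at least
`ℓ + |V|` cycles. -/
theorem stmt11 {V : Type*} [Fintype V] (G : SimpleGraph V) (ℓ : ℕ) :
    (∃ (v : Fin ℓ → V) (w : ∀ i, G.Walk (v i) (v i)),
        (∀ i, (w i).IsCycle) ∧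
        ∀ i j, i ≠ j → ∀ x, x ∈ (w i).support → x ∉ (w j).support) ↔
      (∃ n : ℕ, ℓ + Fintype.card V ≤ n ∧
        ∃ (u : Fin n → (V ⊕ V × Fin 3)) (w : ∀ i, (cycleGadget G).Walk (u i) (u i)),
          (∀ i, (w i).IsCycle) ∧
          (∀ i j, i ≠ j → ∀ x, x ∈ (w i).support → x ∉ (w j).support) ∧
          ∀ x : V ⊕ V × Fin 3, ∃ i, x ∈ (w i).support) := by
  classical
  constructor
  · rintro ⟨v, w, hcyc, hdisj⟩
    refine ⟨ℓ + Fintype.card V, le_refl _, ?_⟩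
    set e : (Fin ℓ ⊕ V) ≃ Fin (ℓ + Fintype.card V) :=
      (Equiv.sumCongr (Equiv.refl _) (Fintype.equivFin V)).trans finSumFinEquiv with he
    set hom : G →g cycleGadget G := ⟨inl, fun h => cg_adj_inl_inl.mpr h⟩ with hhom
    set U : Fin ℓ ⊕ V → V ⊕ V × Fin 3 :=
      Sum.elim (fun i => inl (v i)) (fun x => inr (x, 1)) with hU
    set Wk : ∀ k : Fin ℓ ⊕ V, (cycleGadget G).Walk (U k) (U k) :=
      fun k => Sum.rec (motive := fun k => (cycleGadget G).Walk (U k) (U k))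
        (fun i => (w i).map hom)
        (fun x => if _ : ∃ i, x ∈ (w i).support then triWalk G x else sqWalk G x) k
      with hWk
    -- support facts
    have hsupL : ∀ i : Fin ℓ, (Wk (Sum.inl i)).support = (w i).support.map inl := by
      intro i
      exact Walk.support_map hom (w i)
    have hsupR : ∀ (x : V) (y), y ∈ (Wk (Sum.inr x)).support →
        y = inr (x, 0) ∨ y = inr (x, 1) ∨ y = inr (x, 2) ∨
          (y = inl x ∧ ¬ ∃ i, x ∈ (w i).support) := by
      intro x y hy
      show y = _ ∨ _
      by_cases h : ∃ i, x ∈ (w i).support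
      · have : (Wk (Sum.inr x)) = triWalk G x := by
          show (if _ : ∃ i, x ∈ (w i).support then triWalk G x else sqWalk G x) = _
          rw [dif_pos h]
        rw [this] at hy; change y ∈ (triWalk G x).support at hy; rw [triWalk_support] at hy
        simp only [List.mem_cons, List.mem_singleton] at hy
        tauto
      · have : (Wk (Sum.inr x)) = sqWalk G x := by
          show (if _ : ∃ i, x ∈ (w i).support then triWalk G x else sqWalk G x) = _
          rw [dif_neg h]
        rw [this] at hy; change y ∈ (sqWalk G x).support at hy; rw [sqWalk_support] at hy
        simp only [List.mem_cons, List.mem_singleton] at hy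
        tauto
    have hinrmem : ∀ (x : V) (k : Fin 3), inr (x, k) ∈ (Wk (Sum.inr x)).support := by
      intro x k
      by_cases h : ∃ i, x ∈ (w i).support
      · have : (Wk (Sum.inr x)) = triWalk G x := by
          show (if _ : ∃ i, x ∈ (w i).support then triWalk G x else sqWalk G x) = _
          rw [dif_pos h]
        rw [this]; change inr (x, k) ∈ (triWalk G x).support; rw [triWalk_support]
        fin_cases k <;> simp
      · have : (Wk (Sum.inr x)) = sqWalk G x := by
          show (if _ : ∃ i, x ∈ (w i).support then triWalk G x else sqWalk G x) = _
          rw [dif_neg h]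
        rw [this]; change inr (x, k) ∈ (sqWalk G x).support; rw [sqWalk_support]
        fin_cases k <;> simp
    have key1 : ∀ k, (Wk k).IsCycle := by
      rintro (i | x)
      · exact Walk.IsCycle.map (f := hom) Sum.inl_injective (hcyc i)
      · by_cases h : ∃ i, x ∈ (w i).support
        · have : (Wk (Sum.inr x)) = triWalk G x := by
            show (if _ : ∃ i, x ∈ (w i).support then triWalk G x else sqWalk G x) = _
            rw [dif_pos h]
          rw [this]; exact triWalk_isCycle x
        · have : (Wk (Sum.inr x)) = sqWalk G x := by
            show (if _ : ∃ i, x ∈ (w i).support then triWalk G x else sqWalk G x) = _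
            rw [dif_neg h]
          rw [this]; exact sqWalk_isCycle x
    have key2 : ∀ k k', k ≠ k' → ∀ y, y ∈ (Wk k).support → y ∉ (Wk k').support := by
      rintro (i | x) (j | z) hkk y hy hy'
      · rw [hsupL] at hy hy'
        obtain ⟨a, ha, rfl⟩ := List.mem_map.mp hy
        obtain ⟨b, hb, hab⟩ := List.mem_map.mp hy'
        rw [inl.injEq] at hab
        subst hab
        exact hdisj i j (by rintro rfl; exact hkk rfl) _ ha hb
      · rw [hsupL] at hy
        obtain ⟨a, ha, rfl⟩ := List.mem_map.mp hy
        rcases hsupR z _ hy' with h | h | h | ⟨h, hn⟩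
        · simp at h
        · simp at h
        · simp at h
        · rw [inl.injEq] at h
          subst h
          exact hn ⟨i, ha⟩
      · rw [hsupL] at hy'
        obtain ⟨a, ha, rfl⟩ := List.mem_map.mp hy'
        rcases hsupR x _ hy with h | h | h | ⟨h, hn⟩
        · simp at h
        · simp at h
        · simp at h
        · rw [inl.injEq] at h
          subst h
          exact hn ⟨j, ha⟩
      · have hxz : x ≠ z := by rintro rfl; exact hkk rfl
        have hyx : (∃ k : Fin 3, y = inr (x, k)) ∨ y = inl x := by
          rcases hsupR x _ hy with h | h | h | ⟨h, _⟩
          exacts [Or.inl ⟨0, h⟩, Or.inl ⟨1, h⟩, Or.inl ⟨2, h⟩, Or.inr h]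
        have hyz : (∃ k : Fin 3, y = inr (z, k)) ∨ y = inl z := by
          rcases hsupR z _ hy' with h | h | h | ⟨h, _⟩
          exacts [Or.inl ⟨0, h⟩, Or.inl ⟨1, h⟩, Or.inl ⟨2, h⟩, Or.inr h]
        rcases hyx with ⟨k1, rfl⟩ | rfl <;> rcases hyz with ⟨k2, h2⟩ | h2
        · rw [inr.injEq, Prod.mk.injEq] at h2
          exact hxz h2.1
        · simp at h2
        · simp at h2
        · rw [inl.injEq] at h2
          exact hxz h2
    have key3 : ∀ y : V ⊕ V × Fin 3, ∃ k, y ∈ (Wk k).support := by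
      rintro (a | ⟨x, k⟩)
      · by_cases h : ∃ i, a ∈ (w i).support
        · obtain ⟨i, hi⟩ := h
          exact ⟨Sum.inl i, by rw [hsupL]; exact List.mem_map_of_mem hi⟩
        · refine ⟨Sum.inr a, ?_⟩
          have : (Wk (Sum.inr a)) = sqWalk G a := by
            show (if _ : ∃ i, a ∈ (w i).support then triWalk G a else sqWalk G a) = _
            rw [dif_neg h]
          rw [this]; change inl a ∈ (sqWalk G a).support; rw [sqWalk_support]
          simp
      · exact ⟨Sum.inr x, hinrmem x k⟩
    refine ⟨fun i => U (e.symm i), fun i => Wk (e.symm i), fun i => key1 _, ?_, ?_⟩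
    · intro i j hij y hy
      exact key2 _ _ (fun h => hij (e.symm.injective h)) y hy
    · intro y
      obtain ⟨k, hk⟩ := key3 y
      refine ⟨e k, ?_⟩
      show y ∈ (Wk (e.symm (e k))).support
      rw [Equiv.symm_apply_apply]
      exact hk
  · rintro ⟨n, hn, u, w, hcyc, hdisj, hcov⟩
    have hbx : ∀ x : V, ∃ i, inr (x, 1) ∈ (w i).support := fun x => hcov _
    choose ix hix using hbx
    have hstruct := fun x => gadget_cycle_struct (hcyc (ix x)) (hix x)
    have hinj : Function.Injective ix := by
      intro x y hxy
      have hmem : inr (y, 1) ∈ (w (ix x)).support := by rw [hxy]; exact hix y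
      rcases (hstruct x).1 _ hmem with h | h | h | h
      · simp at h
      · rw [inr.injEq, Prod.mk.injEq] at h
        exact h.1.symm
      · simp at h
      · simp at h
    have hpure : ∀ j : Fin n, (¬ ∃ x, ix x = j) →
        ∀ y ∈ (w j).support, ∃ a : V, y = inl a := by
      intro j hj y hy
      rcases y with a | ⟨x, k⟩
      · exact ⟨a, rfl⟩
      · exfalso
        have hjx : j ≠ ix x := fun h => hj ⟨x, h.symm⟩
        have hdis := hdisj j (ix x) hjx
        fin_cases k
        · exact hdis _ hy (hstruct x).2.1
        · exact hdis _ hy (hix x)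
        · exact hdis _ hy (hstruct x).2.2
    set R : Finset (Fin n) := Finset.univ \ Finset.image ix Finset.univ with hR
    have hmemR : ∀ j : Fin n, j ∈ R ↔ ¬ ∃ x, ix x = j := by
      intro j
      simp [hR]
    have hcardR : ℓ ≤ R.card := by
      have h1 : (Finset.image ix Finset.univ).card = Fintype.card V := by
        rw [Finset.card_image_of_injective _ hinj, Finset.card_univ]
      have h2 : R.card = n - Fintype.card V := by
        rw [hR, Finset.card_sdiff_of_subset (Finset.subset_univ _), h1, Finset.card_univ,
          Fintype.card_fin]
      omega
    have hemb : Nonempty (Fin ℓ ↪ {j : Fin n // j ∈ R}) := by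
      rw [Function.Embedding.nonempty_iff_card_le, Fintype.card_fin, Fintype.card_coe]
      exact hcardR
    obtain ⟨emb⟩ := hemb
    have hex : ∀ j : Fin n, j ∈ R → ∃ (a : V) (q : G.Walk a a),
        q.IsCycle ∧ (w j).support = q.support.map inl :=
      fun j hj => pull_cycle (w j) (hcyc j) (hpure j ((hmemR j).mp hj))
    choose A Q hQcyc hQsup using hex
    refine ⟨fun i => A (emb i).1 (emb i).2, fun i => Q (emb i).1 (emb i).2,
      fun i => hQcyc _ _, ?_⟩
    intro i j hij x hx hx'
    have h1 : inl x ∈ (w (emb i).1).support := by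
      rw [hQsup (emb i).1 (emb i).2]
      exact List.mem_map_of_mem hx
    have h2 : inl x ∈ (w (emb j).1).support := by
      rw [hQsup (emb j).1 (emb j).2]
      exact List.mem_map_of_mem hx'
    have hne : (emb i).1 ≠ (emb j).1 := by
      intro h
      exact hij (emb.injective (Subtype.ext h))
    exact hdisj _ _ hne _ h1 h2
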